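/- Define A : ℝ → Matrix (Fin 2) (Fin 2) ℝ by A(t) = (1/2) · [[sin 2t, -1 - cos 2t], [1 - cos 2t, -sin 2t]], and let Y : ℝ → Matrix (Fin 2) (Fin 2) ℝ satisfy Y'(t) = A(t) · Y(t) for all t and Y(0) = I. Then Y(π) has no real logarithm: there is no real 2×2 matrix Ω with exp(Ω) = Y(π). (This shows the constant π in the convergence condition ∫₀^t ‖A(τ)‖₂ dτ < π is sharp, since here ∫₀^π ‖A(τ)‖₂ dτ = π.) -/

import Mathlib

attribute [local instance] Matrix.normedAddCommGroup Matrix.normedSpace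

/-- The coefficient matrix of Example 2 (Moan's example). -/
noncomputable def Aex (t : ℝ) : Matrix (Fin 2) (Fin 2) ℝ :=
  (1 / 2 : ℝ) •
    !![Real.sin (2 * t), -1 - Real.cos (2 * t);
       1 - Real.cos (2 * t), -Real.sin (2 * t)]

noncomputable def Wex (t : ℝ) : Matrix (Fin 2) (Fin 2) ℝ :=
  !![Real.cos t, Real.sin t;
     t * Real.cos t - Real.sin t, t * Real.sin t + Real.cos t]

noncomputable def Wd (t : ℝ) : Matrix (Fin 2) (Fin 2) ℝ :=
  !![-Real.sin t, Real.cos t;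
     -(t * Real.sin t), t * Real.cos t]

lemma hW (t : ℝ) (i k : Fin 2) : HasDerivAt (fun s => Wex s i k) (Wd t i k) t := by
  fin_cases i <;> fin_cases k <;> simp only [Wex, Wd, Matrix.cons_val', Matrix.cons_val_zero,
    Matrix.cons_val_one, Matrix.head_cons, Matrix.empty_val', Matrix.cons_val_fin_one,
    Matrix.head_fin_const, Fin.isValue, Fin.zero_eta, Fin.mk_one]
  · exact Real.hasDerivAt_cos t
  · exact Real.hasDerivAt_sin t
  · have h := ((hasDerivAt_id t).mul (Real.hasDerivAt_cos t)).sub (Real.hasDerivAt_sin t)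
    refine h.congr_deriv (Eq.symm ?_)
    simp
  · have h := ((hasDerivAt_id t).mul (Real.hasDerivAt_sin t)).add (Real.hasDerivAt_cos t)
    refine h.congr_deriv (Eq.symm ?_)
    simp

/-- For the coefficient matrix of Example 2 (for which `∫₀^π ‖A(τ)‖₂ dτ = π`), the
fundamental solution at time `π` has no real logarithm, so the constant `π` in the
convergence condition is sharp. -/
theorem magnus_stmt11 (Y : ℝ → Matrix (Fin 2) (Fin 2) ℝ)
    (hY : ∀ t : ℝ, HasDerivAt Y (Aex t * Y t) t) (hY0 : Y 0 = 1) :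
    ¬ ∃ Ω : Matrix (Fin 2) (Fin 2) ℝ, NormedSpace.exp Ω = Y Real.pi := by
  have hYpi : Y Real.pi = !![-1, 0; Real.pi, -1] := by
      have hYe : ∀ (t : ℝ) (k j : Fin 2),
          HasDerivAt (fun s => Y s k j) ((Aex t * Y t) k j) t := by
        intro t k j
        exact hasDerivAt_pi.mp (hasDerivAt_pi.mp (hY t) k) j
      have key : ∀ (i j : Fin 2) (t : ℝ),
          HasDerivAt (fun s => Wex s i 0 * Y s 0 j + Wex s i 1 * Y s 1 j) 0 t := by
        intro i j t
        have h := ((hW t i 0).mul (hYe t 0 j)).add ((hW t i 1).mul (hYe t 1 j))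
        refine h.congr_deriv (Eq.symm ?_)
        rw [Matrix.mul_apply, Matrix.mul_apply, Fin.sum_univ_two, Fin.sum_univ_two]
        fin_cases i
        · simp [Wex, Wd, Aex, Real.sin_two_mul, Real.cos_two_mul]
          linear_combination (Real.cos t * Y t 1 j) * Real.sin_sq_add_cos_sq t
        · simp [Wex, Wd, Aex, Real.sin_two_mul, Real.cos_two_mul]
          linear_combination (Real.cos t * Y t 0 j + t * Real.cos t * Y t 1 j) *
            Real.sin_sq_add_cos_sq t
      have hconst : ∀ (i j : Fin 2),
          Wex Real.pi i 0 * Y Real.pi 0 j + Wex Real.pi i 1 * Y Real.pi 1 j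
            = Wex 0 i 0 * Y 0 0 j + Wex 0 i 1 * Y 0 1 j := by
        intro i j
        exact is_const_of_deriv_eq_zero (fun t => (key i j t).differentiableAt)
          (fun t => (key i j t).deriv) Real.pi 0
      have hWY : Wex Real.pi * Y Real.pi = 1 := by
        ext i j
        rw [Matrix.mul_apply, Fin.sum_univ_two, hconst i j, hY0]
        fin_cases i <;> fin_cases j <;> simp [Wex, Matrix.one_apply]
      have hWpi : Wex Real.pi = !![-1, 0; -Real.pi, -1] := by
        simp [Wex]
      have h2 : (!![-1, 0; Real.pi, -1] : Matrix (Fin 2) (Fin 2) ℝ) * Wex Real.pi = 1 := by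
        rw [hWpi, Matrix.mul_fin_two, Matrix.one_fin_two]
        norm_num
      calc Y Real.pi = (!![-1, 0; Real.pi, -1] * Wex Real.pi) * Y Real.pi := by
            rw [h2, one_mul]
        _ = !![-1, 0; Real.pi, -1] * (Wex Real.pi * Y Real.pi) := by rw [Matrix.mul_assoc]
        _ = !![-1, 0; Real.pi, -1] := by rw [hWY, mul_one]
  rw [hYpi]
  rintro ⟨Ω, hΩ⟩
  rw [NormedSpace.exp_eq_tsum (𝕂 := ℝ)] at hΩ
  replace hΩ : ∑' (n : ℕ), ((n.factorial : ℝ)⁻¹) • Ω ^ n = !![-1, 0; Real.pi, -1] := hΩ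
  by_cases hsum : Summable (fun n : ℕ => ((n.factorial : ℝ)⁻¹) • Ω ^ n)
  · have hHS : HasSum (fun n : ℕ => ((n.factorial : ℝ)⁻¹) • Ω ^ n)
        (!![-1, 0; Real.pi, -1] : Matrix (Fin 2) (Fin 2) ℝ) := hΩ ▸ hsum.hasSum
    have hL := hHS.map (AddMonoidHom.mulLeft Ω) (continuous_mul_left Ω)
    have hR := hHS.map (AddMonoidHom.mulRight Ω) (continuous_mul_right Ω)
    simp only [Function.comp_def, AddMonoidHom.coe_mulLeft, AddMonoidHom.coe_mulRight] at hL hR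
    have hfun : (fun n : ℕ => Ω * (((n.factorial : ℝ)⁻¹) • Ω ^ n))
        = fun n : ℕ => (((n.factorial : ℝ)⁻¹) • Ω ^ n) * Ω := by
      funext n
      rw [mul_smul_comm, smul_mul_assoc, ← pow_succ, ← pow_succ']
    rw [hfun] at hL
    have hcomm : (!![-1, 0; Real.pi, -1] : Matrix (Fin 2) (Fin 2) ℝ) * Ω
        = Ω * !![-1, 0; Real.pi, -1] := hR.unique hL
    have hb : Ω 0 1 = 0 := by
      have h00 := congrFun (congrFun hcomm 0) 0
      simp [Matrix.mul_apply, Fin.sum_univ_two] at h00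
      exact h00
    have hpow : ∀ n : ℕ, (Ω ^ n) 0 0 = (Ω 0 0) ^ n ∧ (Ω ^ n) 0 1 = 0 := by
      intro n
      induction n with
      | zero => simp [Matrix.one_apply]
      | succ n ih =>
        rw [pow_succ, pow_succ]
        constructor
        · rw [Matrix.mul_apply, Fin.sum_univ_two, ih.1, ih.2]
          ring
        · rw [Matrix.mul_apply, Fin.sum_univ_two, ih.1, ih.2, hb]
          ring
    have hentry : HasSum (fun n : ℕ => ((n.factorial : ℝ)⁻¹) • (Ω 0 0) ^ n) (-1 : ℝ) := by
      have h1 := (Pi.hasSum.mp hHS) 0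
      have h2 := (Pi.hasSum.mp h1) 0
      simpa [(hpow _).1] using h2
    have hexp : Real.exp (Ω 0 0) = -1 := by
      rw [Real.exp_eq_exp_ℝ, NormedSpace.exp_eq_tsum (𝕂 := ℝ)]
      exact hentry.tsum_eq
    linarith [Real.exp_pos (Ω 0 0)]
  · rw [tsum_eq_zero_of_not_summable hsum] at hΩ
    have h00 := congrFun (congrFun hΩ 0) 0
    simp at h00
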